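/- In the polynomial ring ℤ[t, x], det(I_{m+n−1} − x·M(m,n)) = Σ_{i=0}^{m+n−1} t^{k_i} x^i. -/

import Mathlib

open Polynomial Matrix Finset

def d8w (m n : ℕ) : ℕ → ℕ × ℕ × ℕ
  | 0 => (m, 1, 1)
  | j+1 =>
    let p := d8w m n j
    if p.1 < n then (p.1 + m, p.2.1 + 1, p.2.2) else (p.1 - n, p.2.1, p.2.2 + 1)

lemma d8w_succ (m n j : ℕ) : d8w m n (j+1) =
    if (d8w m n j).1 < n then ((d8w m n j).1 + m, (d8w m n j).2.1 + 1, (d8w m n j).2.2)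
    else ((d8w m n j).1 - n, (d8w m n j).2.1, (d8w m n j).2.2 + 1) := rfl

lemma d8w_inv (m n : ℕ) (hm : 2 ≤ m) (hmn : m < n) (hcop : Nat.Coprime m n) :
    ∀ j, j ≤ m + n - 2 →
      m * (d8w m n j).2.1 + n = n * (d8w m n j).2.2 + (d8w m n j).1 ∧
      1 ≤ (d8w m n j).1 ∧ (d8w m n j).1 ≤ m + n - 1 ∧
      (d8w m n j).2.1 + (d8w m n j).2.2 = j + 2 ∧
      1 ≤ (d8w m n j).2.1 ∧ 1 ≤ (d8w m n j).2.2 ∧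
      ((d8w m n j).1 = n → j = m + n - 2) := by
  have hclause : ∀ (J a b : ℕ), m * a + n = n * b + n → 1 ≤ a → 1 ≤ b →
      a + b = J + 2 → J ≤ m + n - 3 → False := by
    intro J a b he ha1 hb1 hab1 hJ
    have hma : m * a = n * b := by omega
    have hna : n ∣ a := (Nat.Coprime.dvd_of_dvd_mul_left hcop.symm ⟨b, by linarith⟩)
    have hmb : m ∣ b := (Nat.Coprime.dvd_of_dvd_mul_left hcop ⟨a, by linarith⟩)
    have h1 : n ≤ a := Nat.le_of_dvd (by omega) hna
    have h2 : m ≤ b := Nat.le_of_dvd (by omega) hmb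
    omega
  intro j
  induction j with
  | zero =>
    intro _
    show m * 1 + n = n * 1 + m ∧ 1 ≤ m ∧ m ≤ m + n - 1 ∧ 1 + 1 = 0 + 2 ∧
      1 ≤ 1 ∧ 1 ≤ 1 ∧ (m = n → 0 = m + n - 2)
    exact ⟨by ring, by omega, by omega, rfl, le_refl _, le_refl _,
      fun h => absurd (h ▸ hmn) (lt_irrefl n)⟩
  | succ j ih =>
    intro hj
    obtain ⟨heq, hw1, hw2, hab, ha, hb, hn⟩ := ih (by omega)
    have hwne : (d8w m n j).1 ≠ n := fun h => by omega
    set w := (d8w m n j).1 with hwdef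
    set a := (d8w m n j).2.1 with hadef
    set b := (d8w m n j).2.2 with hbdef
    have hma : m * (a + 1) = m * a + m := by ring
    have hnb : n * (b + 1) = n * b + n := by ring
    have hd : d8w m n (j+1) = if w < n then (w + m, a + 1, b) else (w - n, a, b + 1) := d8w_succ m n j
    by_cases hc : w < n
    · rw [hd, if_pos hc]
      show m * (a+1) + n = n * b + (w + m) ∧ 1 ≤ w + m ∧ w + m ≤ m + n - 1 ∧
        (a+1) + b = (j+1) + 2 ∧ 1 ≤ a + 1 ∧ 1 ≤ b ∧ (w + m = n → j + 1 = m + n - 2)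
      refine ⟨by omega, by omega, by omega, by omega, by omega, by omega, ?_⟩
      intro hwn
      by_contra hne
      exact hclause (j+1) (a+1) b (by omega) (by omega) (by omega) (by omega) (by omega)
    · rw [hd, if_neg hc]
      have hgt : n < w := by omega
      show m * a + n = n * (b+1) + (w - n) ∧ 1 ≤ w - n ∧ w - n ≤ m + n - 1 ∧
        a + (b+1) = (j+1) + 2 ∧ 1 ≤ a ∧ 1 ≤ b + 1 ∧ (w - n = n → j + 1 = m + n - 2)
      refine ⟨by omega, by omega, by omega, by omega, by omega, by omega, ?_⟩
      intro hwn
      by_contra hne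
      exact hclause (j+1) a (b+1) (by omega) (by omega) (by omega) (by omega) (by omega)

lemma d8w_mono (m n : ℕ) : ∀ i j : ℕ, i ≤ j →
    (d8w m n i).2.1 ≤ (d8w m n j).2.1 ∧ (d8w m n i).2.2 ≤ (d8w m n j).2.2 := by
  have hstep : ∀ j, (d8w m n j).2.1 ≤ (d8w m n (j+1)).2.1 ∧
      (d8w m n j).2.2 ≤ (d8w m n (j+1)).2.2 := by
    intro j
    rw [d8w_succ]
    by_cases hc : (d8w m n j).1 < n
    · rw [if_pos hc]; exact ⟨Nat.le_succ _, le_refl _⟩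
    · rw [if_neg hc]; exact ⟨le_refl _, Nat.le_succ _⟩
  intro i j hij
  induction j with
  | zero =>
    have h0 : i = 0 := by omega
    subst h0; exact ⟨le_refl _, le_refl _⟩
  | succ j ihj =>
    rcases Nat.lt_succ_iff_lt_or_eq.mp (Nat.lt_succ_of_le hij) with h | h
    · have := ihj (by omega)
      exact ⟨le_trans this.1 (hstep j).1, le_trans this.2 (hstep j).2⟩
    · subst h; exact ⟨le_refl _, le_refl _⟩


lemma d8w_inj (m n : ℕ) (hm : 2 ≤ m) (hmn : m < n) (hcop : Nat.Coprime m n) :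
    ∀ i j : ℕ, i ≤ m + n - 2 → j ≤ m + n - 2 →
      (d8w m n i).1 = (d8w m n j).1 → i = j := by
  have key : ∀ i j : ℕ, i ≤ j → i ≤ m + n - 2 → j ≤ m + n - 2 →
      (d8w m n i).1 = (d8w m n j).1 → i = j := by
    intro i j hij hi hj hw
    obtain ⟨ei, _, _, si, _, _, _⟩ := d8w_inv m n hm hmn hcop i hi
    obtain ⟨ej, _, _, sj, _, _, _⟩ := d8w_inv m n hm hmn hcop j hj
    obtain ⟨hma, hmb⟩ := d8w_mono m n i j hij
    set ai := (d8w m n i).2.1; set bi := (d8w m n i).2.2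
    set aj := (d8w m n j).2.1; set bj := (d8w m n j).2.2
    set d := aj - ai with hd; set e := bj - bi with he
    have h1 : aj = ai + d := by omega
    have h2 : bj = bi + e := by omega
    have h3 : m * aj = m * ai + m * d := by rw [h1]; ring
    have h4 : n * bj = n * bi + n * e := by rw [h2]; ring
    have h5 : m * d = n * e := by omega
    rcases Nat.eq_zero_or_pos d with h0 | h0
    · have hz : n * e = 0 := by rw [h0, Nat.mul_zero] at h5; omega
      have he0 : e = 0 := by
        rcases Nat.mul_eq_zero.mp hz with h | h
        · omega
        · exact h
      omega
    · have hnd : n ∣ d := Nat.Coprime.dvd_of_dvd_mul_left hcop.symm ⟨e, by linarith⟩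
      have hme : m ∣ e := Nat.Coprime.dvd_of_dvd_mul_left hcop ⟨d, by linarith⟩
      have hdn : n ≤ d := Nat.le_of_dvd h0 hnd
      have hepos : 0 < e := by
        rcases Nat.eq_zero_or_pos e with h | h
        · exfalso; rw [h, Nat.mul_zero] at h5
          have := Nat.mul_eq_zero.mp h5; omega
        · exact h
      have hem : m ≤ e := Nat.le_of_dvd hepos hme
      omega
  intro i j hi hj hw
  rcases le_total i j with h | h
  · exact key i j h hi hj hw
  · exact (key j i h hj hi hw.symm).symm


lemma d8w_bnd (m n : ℕ) (hm : 2 ≤ m) (hmn : m < n) (hcop : Nat.Coprime m n) :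
    ∀ j, j ≤ m + n - 2 → (d8w m n j).2.1 ≤ n ∧ (d8w m n j).2.2 ≤ m := by
  intro j hj
  obtain ⟨heq, hw1, hw2, hab, ha, hb, _⟩ := d8w_inv m n hm hmn hcop j hj
  set w := (d8w m n j).1; set a := (d8w m n j).2.1; set b := (d8w m n j).2.2
  constructor
  · by_contra hcon
    have ha' : n + 1 ≤ a := by omega
    have hb' : b + 1 ≤ m := by omega
    have h4 : m * (n+1) ≤ m * a := Nat.mul_le_mul_left m ha'
    have h5 : n * (b+1) ≤ n * m := Nat.mul_le_mul_left n hb'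
    have h6 : m * (n+1) = n * m + m := by ring
    have h7 : n * (b+1) = n * b + n := by ring
    omega
  · by_contra hcon
    have hb' : m + 1 ≤ b := by omega
    have ha' : a + 1 ≤ n := by omega
    have h4 : n * (m+1) ≤ n * b := Nat.mul_le_mul_left n hb'
    have h5 : m * (a+1) ≤ m * n := Nat.mul_le_mul_left m ha'
    have h6 : n * (m+1) = m * n + n := by ring
    have h7 : m * (a+1) = m * a + m := by ring
    omega

theorem d8w_enum (m n : ℕ) (hm : 2 ≤ m) (hmn : m < n) (hcop : Nat.Coprime m n)
    (k : ℕ → ℕ)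
    (hmono : ∀ i j : ℕ, i < j → j < m + n → k i < k j)
    (hmem : ∀ x : ℕ, ((m ∣ x ∨ n ∣ x) ∧ x ≤ m * n) ↔ ∃ i < m + n, k i = x) :
    k 0 = 0 ∧ ∀ j, j ≤ m + n - 2 →
      k (j+1) = min (m * (d8w m n j).2.1) (n * (d8w m n j).2.2) := by
  set fn : ℕ → ℕ := fun i =>
    if i = 0 then 0 else min (m * (d8w m n (i-1)).2.1) (n * (d8w m n (i-1)).2.2) with hfn
  have hfn0 : fn 0 = 0 := by simp [hfn]
  have hfnS : ∀ j : ℕ, fn (j+1) = min (m * (d8w m n j).2.1) (n * (d8w m n j).2.2) := by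
    intro j; simp [hfn]
  -- one-step strict monotonicity
  have hfstep : ∀ i, i + 1 < m + n → fn i < fn (i+1) := by
    intro i hi
    cases i with
    | zero =>
      rw [hfn0, hfnS]
      have : d8w m n 0 = (m, 1, 1) := rfl
      rw [this]
      show 0 < min (m * 1) (n * 1)
      have : min (m*1) (n*1) = m := by
        rw [Nat.mul_one, Nat.mul_one]; exact min_eq_left (le_of_lt hmn)
      omega
    | succ j =>
      have hj : j ≤ m + n - 2 := by omega
      obtain ⟨heq, hw1, hw2, hab, ha, hb, hlast⟩ := d8w_inv m n hm hmn hcop j hj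
      have hwne : (d8w m n j).1 ≠ n := by
        intro h; have := hlast h; omega
      rw [hfnS, hfnS]
      have hd := d8w_succ m n j
      set w := (d8w m n j).1; set a := (d8w m n j).2.1; set b := (d8w m n j).2.2
      by_cases hc : w < n
      · rw [hd, if_pos hc]
        show min (m * a) (n * b) < min (m * (a+1)) (n * b)
        have hlt : m * a < n * b := by omega
        have h1 : m * (a+1) = m * a + m := by ring
        rw [min_eq_left (le_of_lt hlt)]
        exact lt_min (by omega) hlt
      · have hgt : n < w := by omega
        rw [hd, if_neg hc]
        show min (m * a) (n * b) < min (m * a) (n * (b+1))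
        have hlt : n * b < m * a := by omega
        have h1 : n * (b+1) = n * b + n := by ring
        rw [min_eq_right (le_of_lt hlt)]
        exact lt_min hlt (by omega)
  -- full strict monotonicity
  have hfmono : ∀ i j, i < j → j < m + n → fn i < fn j := by
    intro i j hij hj
    induction j with
    | zero => omega
    | succ j ihj =>
      rcases Nat.lt_succ_iff_lt_or_eq.mp hij with h | h
      · exact lt_trans (ihj h (by omega)) (hfstep j hj)
      · subst h; exact hfstep _ hj
  -- membership
  have hfP : ∀ i, i < m + n → (m ∣ fn i ∨ n ∣ fn i) ∧ fn i ≤ m * n := by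
    intro i hi
    cases i with
    | zero => rw [hfn0]; exact ⟨Or.inl (dvd_zero m), Nat.zero_le _⟩
    | succ j =>
      have hj : j ≤ m + n - 2 := by omega
      obtain ⟨haU, hbU⟩ := d8w_bnd m n hm hmn hcop j hj
      rw [hfnS]
      rcases le_total (m * (d8w m n j).2.1) (n * (d8w m n j).2.2) with h | h
      · rw [min_eq_left h]
        exact ⟨Or.inl ⟨_, rfl⟩, Nat.mul_le_mul_left m haU⟩
      · rw [min_eq_right h]
        refine ⟨Or.inr ⟨_, rfl⟩, ?_⟩
        calc n * (d8w m n j).2.2 ≤ n * m := Nat.mul_le_mul_left n hbU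
        _ = m * n := Nat.mul_comm n m
  -- Fin versions
  have hmn3 : 0 < m + n := by omega
  set F : Fin (m+n) → ℕ := fun i => fn i.val with hF
  set G : Fin (m+n) → ℕ := fun i => k i.val with hG
  have hFs : StrictMono F := fun i j h => hfmono i.val j.val h j.isLt
  have hGs : StrictMono G := fun i j h => hmono i.val j.val h j.isLt
  have hrangeG : Set.range G = {x | (m ∣ x ∨ n ∣ x) ∧ x ≤ m * n} := by
    ext x
    constructor
    · rintro ⟨i, rfl⟩
      exact (hmem (G i)).mpr ⟨i.val, i.isLt, rfl⟩
    · intro hP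
      obtain ⟨i, hi, he⟩ := (hmem x).mp hP
      exact ⟨⟨i, hi⟩, he⟩
  have hrange : Set.range F = Set.range G := by
    have hsub : (Finset.univ.image F : Finset ℕ) ⊆ Finset.univ.image G := by
      intro x hx
      obtain ⟨i, _, rfl⟩ := Finset.mem_image.mp hx
      have hP : (m ∣ F i ∨ n ∣ F i) ∧ F i ≤ m * n := hfP i.val i.isLt
      obtain ⟨j, hj, he⟩ := (hmem (F i)).mp hP
      exact Finset.mem_image.mpr ⟨⟨j, hj⟩, Finset.mem_univ _, he⟩
    have hcF : (Finset.univ.image F).card = m + n := by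
      rw [Finset.card_image_of_injective _ hFs.injective, Finset.card_univ, Fintype.card_fin]
    have hcG : (Finset.univ.image G).card = m + n := by
      rw [Finset.card_image_of_injective _ hGs.injective, Finset.card_univ, Fintype.card_fin]
    have heq : (Finset.univ.image F : Finset ℕ) = Finset.univ.image G :=
      Finset.eq_of_subset_of_card_le hsub (by omega)
    have h1 : Set.range F = ↑(Finset.univ.image F : Finset ℕ) := by
      rw [Finset.coe_image, Finset.coe_univ, Set.image_univ]
    have h2 : Set.range G = ↑(Finset.univ.image G : Finset ℕ) := by
      rw [Finset.coe_image, Finset.coe_univ, Set.image_univ]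
    rw [h1, h2, heq]
  haveI : WellFoundedLT (Fin (m+n)) := Finite.to_wellFoundedLT
  have hFG : F = G := (StrictMono.range_inj hFs hGs).mp hrange
  have hkey : ∀ i, i < m + n → fn i = k i := by
    intro i hi
    have := congrFun hFG ⟨i, hi⟩
    exact this
  constructor
  · have := hkey 0 (by omega)
    rw [← this, hfn0]
  · intro j hj
    have := hkey (j+1) (by omega)
    rw [← this, hfnS]

abbrev R8 := Polynomial (Polynomial ℤ)

noncomputable def d8S (m n : ℕ) :
    Matrix (Fin (m+n-1)) (Fin (m+n-1)) (Polynomial (Polynomial ℤ)) :=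
  Matrix.of fun i j =>
    if i.val + 1 ≤ n - 1 then (if j.val + 1 = m + (i.val + 1) then 1 else 0)
    else if i.val + 1 = n then 0
    else if j.val + 1 = i.val + 1 - n then (Polynomial.C (Polynomial.X : Polynomial ℤ))^n else 0


section
variable (m n : ℕ) (hm : 2 ≤ m) (hmn : m < n) (hcop : Nat.Coprime m n)

theorem d8row (hm : 2 ≤ m) (hmn : m < n) (hcop : Nat.Coprime m n) :
    ∀ kk j, j + kk ≤ m + n - 2 → ∀ (i col : Fin (m+n-1)), i.val + 1 = (d8w m n j).1 →
      ((d8S m n)^kk) i col =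
        if col.val + 1 = (d8w m n (j+kk)).1 then
          (Polynomial.C (Polynomial.X : Polynomial ℤ)) ^
            (n * ((d8w m n (j+kk)).2.2 - (d8w m n j).2.2)) else 0 := by
  intro kk
  induction kk with
  | zero =>
    intro j hj i col hi
    simp only [Nat.add_zero, pow_zero, Matrix.one_apply, Nat.sub_self, Nat.mul_zero]
    by_cases h : i = col
    · rw [if_pos h, if_pos (show col.val + 1 = (d8w m n j).1 from h ▸ hi)]
    · rw [if_neg h, if_neg (fun hc : col.val + 1 = (d8w m n j).1 => h (Fin.ext (by omega)))]
  | succ kk ih =>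
    intro j hj i col hi
    have hjkk : j + kk ≤ m + n - 2 := by omega
    obtain ⟨heq, hw1, hw2, hab, ha, hb, hlast⟩ := d8w_inv m n hm hmn hcop (j+kk) hjkk
    have hwne : (d8w m n (j+kk)).1 ≠ n := by
      intro h; have := hlast h; omega
    have hbmono : (d8w m n j).2.2 ≤ (d8w m n (j+kk)).2.2 :=
      (d8w_mono m n j (j+kk) (by omega)).2
    set tt : Polynomial (Polynomial ℤ) := Polynomial.C Polynomial.X with htt
    set w := (d8w m n (j+kk)).1 with hw
    set b0 := (d8w m n j).2.2 with hb0
    set b1 := (d8w m n (j+kk)).2.2 with hb1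
    set u₀ : Fin (m+n-1) := ⟨w - 1, by omega⟩ with hu₀
    have hu₀v : u₀.val + 1 = w := by simp [hu₀]; omega
    rw [pow_succ, Matrix.mul_apply]
    have hsummand : ∀ u : Fin (m+n-1),
        ((d8S m n)^kk) i u * (d8S m n) u col =
        if u = u₀ then tt ^ (n * (b1 - b0)) * (d8S m n) u col else 0 := by
      intro u
      rw [ih j (by omega) i u hi]
      by_cases h : u.val + 1 = w
      · rw [if_pos h, if_pos (Fin.ext (by omega) : u = u₀)]
      · rw [if_neg h, if_neg (fun hc : u = u₀ => h (by rw [hc]; exact hu₀v)), zero_mul]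
    rw [Finset.sum_congr rfl (fun u _ => hsummand u), Finset.sum_ite_eq' Finset.univ u₀]
    rw [if_pos (Finset.mem_univ u₀)]
    have hstep := d8w_succ m n (j+kk)
    have hjk1 : j + (kk+1) = (j + kk) + 1 := by omega
    by_cases hc : w < n
    · -- entry in row u₀ : 1 at column w + m
      have hSu : ∀ v : Fin (m+n-1), (d8S m n) u₀ v =
          if v.val + 1 = m + w then 1 else 0 := by
        intro v
        show (if u₀.val + 1 ≤ n - 1 then (if v.val + 1 = m + (u₀.val + 1) then 1 else 0)
          else if u₀.val + 1 = n then 0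
          else if v.val + 1 = u₀.val + 1 - n then (Polynomial.C (Polynomial.X : Polynomial ℤ))^n else 0)
          = if v.val + 1 = m + w then 1 else 0
        rw [hu₀v, if_pos (by omega)]
      rw [hSu col]
      have hw' : (d8w m n (j+(kk+1))).1 = w + m := by
        rw [hjk1, hstep, if_pos hc]
      have hb' : (d8w m n (j+(kk+1))).2.2 = b1 := by
        rw [hjk1, hstep, if_pos hc]
      rw [hw', hb']
      by_cases h : col.val + 1 = m + w
      · rw [if_pos h, if_pos (by omega), mul_one]
      · rw [if_neg h, if_neg (by omega), mul_zero]
    · -- w > n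
      have hgt : n < w := by omega
      have hSu : ∀ v : Fin (m+n-1), (d8S m n) u₀ v =
          if v.val + 1 = w - n then tt^n else 0 := by
        intro v
        show (if u₀.val + 1 ≤ n - 1 then (if v.val + 1 = m + (u₀.val + 1) then 1 else 0)
          else if u₀.val + 1 = n then 0
          else if v.val + 1 = u₀.val + 1 - n then (Polynomial.C (Polynomial.X : Polynomial ℤ))^n else 0)
          = if v.val + 1 = w - n then tt^n else 0
        rw [hu₀v, if_neg (by omega), if_neg (by omega)]
      rw [hSu col]
      have hw' : (d8w m n (j+(kk+1))).1 = w - n := by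
        rw [hjk1, hstep, if_neg (by omega)]
      have hb' : (d8w m n (j+(kk+1))).2.2 = b1 + 1 := by
        rw [hjk1, hstep, if_neg (by omega)]
      rw [hw', hb']
      by_cases h : col.val + 1 = w - n
      · rw [if_pos h, if_pos (by omega)]
        rw [← pow_add]
        congr 1
        have : n * (b1 + 1 - b0) = n * (b1 - b0) + n := by
          have h2 : b1 + 1 - b0 = (b1 - b0) + 1 := by omega
          rw [h2]; ring
        omega
      · rw [if_neg h, if_neg (by omega), mul_zero]
end

section
variable (m n : ℕ) (hm : 2 ≤ m) (hmn : m < n) (hcop : Nat.Coprime m n)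

-- the walk-position bijection
theorem d8J (hm : 2 ≤ m) (hmn : m < n) (hcop : Nat.Coprime m n) :
    ∃ J : Fin (m+n-1) → Fin (m+n-1), Function.Bijective J ∧
      (∀ j : Fin (m+n-1), (J j).val + 1 = (d8w m n j.val).1) := by
  have hN : 2 ≤ m + n - 1 := by omega
  have hbd : ∀ j : Fin (m+n-1), (d8w m n j.val).1 - 1 < m + n - 1 := by
    intro j
    obtain ⟨_, h1, h2, _⟩ := d8w_inv m n hm hmn hcop j.val (by omega)
    omega
  refine ⟨fun j => ⟨(d8w m n j.val).1 - 1, hbd j⟩, ?_, ?_⟩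
  · rw [Fintype.bijective_iff_injective_and_card]
    refine ⟨fun i j hij => ?_, rfl⟩
    obtain ⟨_, hi1, _⟩ := d8w_inv m n hm hmn hcop i.val (by omega)
    obtain ⟨_, hj1, _⟩ := d8w_inv m n hm hmn hcop j.val (by omega)
    have : (d8w m n i.val).1 - 1 = (d8w m n j.val).1 - 1 := congrArg Fin.val hij
    exact Fin.ext (d8w_inj m n hm hmn hcop i.val j.val (by omega) (by omega) (by omega))
  · intro j
    obtain ⟨_, h1, _⟩ := d8w_inv m n hm hmn hcop j.val (by omega)
    show (d8w m n j.val).1 - 1 + 1 = (d8w m n j.val).1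
    omega

theorem d8wlast (hm : 2 ≤ m) (hmn : m < n) (hcop : Nat.Coprime m n) :
    (d8w m n (m+n-2)).1 = n := by
  obtain ⟨J, ⟨hinj, hsurj⟩, hJ⟩ := d8J m n hm hmn hcop
  obtain ⟨j, hj⟩ := hsurj ⟨n - 1, by omega⟩
  have h1 : (d8w m n j.val).1 = n := by
    have := hJ j
    rw [hj] at this
    simp at this
    omega
  obtain ⟨_, _, _, _, _, _, hlast⟩ := d8w_inv m n hm hmn hcop j.val (by omega)
  have := hlast h1
  rw [← this, h1]

theorem d8SN (hm : 2 ≤ m) (hmn : m < n) (hcop : Nat.Coprime m n) :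
    (d8S m n)^(m+n-1) = 0 := by
  obtain ⟨J, ⟨hinj, hsurj⟩, hJ⟩ := d8J m n hm hmn hcop
  apply Matrix.ext
  intro i col
  rw [Matrix.zero_apply]
  obtain ⟨j, hj⟩ := hsurj i
  have hi : i.val + 1 = (d8w m n j.val).1 := by rw [← hj]; exact hJ j
  rw [show (d8S m n)^(m+n-1) = (d8S m n)^(m + n - 2 - j.val) * (d8S m n)^(j.val+1) from by
    rw [← pow_add]; congr 1; omega, Matrix.mul_apply]
  have hrow := d8row m n hm hmn hcop (m + n - 2 - j.val) j.val (by omega) i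
  have hwl : (d8w m n (j.val + (m + n - 2 - j.val))).1 = n := by
    have h2 : j.val + (m + n - 2 - j.val) = m + n - 2 := by omega
    rw [h2]; exact d8wlast m n hm hmn hcop
  set u₀ : Fin (m+n-1) := ⟨n - 1, by omega⟩ with hu₀
  have hzero_row : ∀ v : Fin (m+n-1), (d8S m n) u₀ v = 0 := by
    intro v
    show (if u₀.val + 1 ≤ n - 1 then (if v.val + 1 = m + (u₀.val + 1) then 1 else 0)
      else if u₀.val + 1 = n then 0
      else if v.val + 1 = u₀.val + 1 - n then (Polynomial.C (Polynomial.X : Polynomial ℤ))^n else 0) = 0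
    have hval : u₀.val = n - 1 := rfl
    have : u₀.val + 1 = n := by omega
    rw [this, if_neg (by omega), if_pos rfl]
  have hpow_row : ∀ v : Fin (m+n-1), ((d8S m n)^(j.val+1)) u₀ v = 0 := by
    intro v
    rw [pow_succ', Matrix.mul_apply]
    apply Finset.sum_eq_zero
    intro u _
    rw [hzero_row u, zero_mul]
  have : ∀ u : Fin (m+n-1), ((d8S m n)^(m + n - 2 - j.val)) i u * ((d8S m n)^(j.val+1)) u col = 0 := by
    intro u
    rw [hrow u hi]
    by_cases h : u.val + 1 = (d8w m n (j.val + (m + n - 2 - j.val))).1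
    · rw [if_pos h]
      have hu : u = u₀ := by
        rw [hwl] at h
        have hval : u₀.val = n - 1 := rfl
        exact Fin.ext (by omega)
      rw [hu, hpow_row col, mul_zero]
    · rw [if_neg h, zero_mul]
  rw [Finset.sum_congr rfl (fun u _ => this u)]
  simp

theorem d8detB (hm : 2 ≤ m) (hmn : m < n) (hcop : Nat.Coprime m n) :
    (1 - (Polynomial.X : Polynomial (Polynomial ℤ)) • d8S m n).det = 1 := by
  obtain ⟨J, hbij, hJ⟩ := d8J m n hm hmn hcop
  set B := 1 - (Polynomial.X : Polynomial (Polynomial ℤ)) • d8S m n with hB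
  set e : Fin (m+n-1) ≃ Fin (m+n-1) := Equiv.ofBijective J hbij with he
  rw [← Matrix.det_submatrix_equiv_self e B]
  have hSdiag : ∀ i : Fin (m+n-1), (d8S m n) (J i) (J i) = 0 := by
    intro i
    show (if (J i).val + 1 ≤ n - 1 then (if (J i).val + 1 = m + ((J i).val + 1) then 1 else 0)
      else if (J i).val + 1 = n then 0
      else if (J i).val + 1 = (J i).val + 1 - n then (Polynomial.C (Polynomial.X : Polynomial ℤ))^n else 0) = 0
    by_cases h1 : (J i).val + 1 ≤ n - 1
    · rw [if_pos h1, if_neg (by omega)]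
    · rw [if_neg h1]
      by_cases h2 : (J i).val + 1 = n
      · rw [if_pos h2]
      · rw [if_neg h2, if_neg (by omega)]
  have hSoff : ∀ i j : Fin (m+n-1), (j : ℕ) < (i : ℕ) → (d8S m n) (J i) (J j) = 0 := by
    intro i j hij
    have hJi : (J i).val + 1 = (d8w m n i.val).1 := hJ i
    have hJj : (J j).val + 1 = (d8w m n j.val).1 := hJ j
    show (if (J i).val + 1 ≤ n - 1 then (if (J j).val + 1 = m + ((J i).val + 1) then 1 else 0)
      else if (J i).val + 1 = n then 0
      else if (J j).val + 1 = (J i).val + 1 - n then (Polynomial.C (Polynomial.X : Polynomial ℤ))^n else 0) = 0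
    obtain ⟨_, hwi1, hwi2, _⟩ := d8w_inv m n hm hmn hcop i.val (by omega)
    have hine : i.val ≠ m + n - 2 → i.val + 1 ≤ m + n - 2 := by omega
    by_cases h1 : (J i).val + 1 ≤ n - 1
    · rw [if_pos h1]
      rw [if_neg ?hcnd]
      case hcnd =>
        intro hcnd
        -- then w(j) = w(i) + m = w(i+1)
        have hilt : i.val ≠ m + n - 2 := by
          intro hieq
          have : (d8w m n i.val).1 = n := by
            rw [hieq]; exact d8wlast m n hm hmn hcop
          omega
        have hstep : (d8w m n (i.val + 1)).1 = (d8w m n i.val).1 + m := by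
          show (if (d8w m n i.val).1 < n then ((d8w m n i.val).1 + m, (d8w m n i.val).2.1 + 1,
            (d8w m n i.val).2.2) else ((d8w m n i.val).1 - n, (d8w m n i.val).2.1,
            (d8w m n i.val).2.2 + 1)).1 = (d8w m n i.val).1 + m
          rw [if_pos (by omega)]
        have heqw : (d8w m n j.val).1 = (d8w m n (i.val+1)).1 := by omega
        have := d8w_inj m n hm hmn hcop j.val (i.val+1) (by omega) (by omega) heqw
        omega
    · rw [if_neg h1]
      by_cases h2 : (J i).val + 1 = n
      · rw [if_pos h2]
      · rw [if_neg h2]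
        rw [if_neg ?hcnd2]
        case hcnd2 =>
          intro hcnd
          have hilt : i.val ≠ m + n - 2 := by
            intro hieq
            have : (d8w m n i.val).1 = n := by
              rw [hieq]; exact d8wlast m n hm hmn hcop
            omega
          have hstep : (d8w m n (i.val + 1)).1 = (d8w m n i.val).1 - n := by
            show (if (d8w m n i.val).1 < n then ((d8w m n i.val).1 + m, (d8w m n i.val).2.1 + 1,
              (d8w m n i.val).2.2) else ((d8w m n i.val).1 - n, (d8w m n i.val).2.1,
              (d8w m n i.val).2.2 + 1)).1 = (d8w m n i.val).1 - n
            rw [if_neg (by omega)]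
          have heqw : (d8w m n j.val).1 = (d8w m n (i.val+1)).1 := by omega
          have := d8w_inj m n hm hmn hcop j.val (i.val+1) (by omega) (by omega) heqw
          omega
  have htri : (B.submatrix e e).BlockTriangular id := by
    intro i j hij
    have hij' : (j : ℕ) < (i : ℕ) := hij
    show B (J i) (J j) = 0
    have hne : J i ≠ J j := by
      intro h
      have : i = j := hbij.1 h
      rw [this] at hij'
      exact lt_irrefl _ hij'
    rw [hB, Matrix.sub_apply, Matrix.smul_apply, Matrix.one_apply_ne hne,
      hSoff i j hij', smul_zero, sub_zero]
  rw [Matrix.det_of_upperTriangular htri]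
  apply Finset.prod_eq_one
  intro i _
  show B (J i) (J i) = 1
  rw [hB, Matrix.sub_apply, Matrix.smul_apply, Matrix.one_apply_eq, hSdiag i, smul_zero, sub_zero]
end

/-- Let `k` be the increasing enumeration of `𝔉(m,n)`
and let `M(m,n)` be the `(m+n-1) × (m+n-1)` matrix over `ℤ[t,x]`
(realized as `Polynomial (Polynomial ℤ)`, with `t` the inner and `x` the
outer variable, so `t = C X` and `x = X`) described by: row `I`
(`1 ≤ I ≤ n-1`) has `-t^I` in column `m` and `1` in column `m+I`; row `n`
has `-t^n` in column `m`; row `n+i` (`1 ≤ i ≤ m-1`) has `t^n` in column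
`i` and `-t^n` in column `m`; all other entries vanish.  Then
`det (1 - x • M(m,n)) = Σ_{i=0}^{m+n-1} t^(k i) * x^i`. -/
theorem det_one_sub_xM (m n : ℕ) (hm : 2 ≤ m) (hmn : m < n)
    (hcop : Nat.Coprime m n) (k : ℕ → ℕ)
    (hmono : ∀ i j : ℕ, i < j → j < m + n → k i < k j)
    (hmem : ∀ x : ℕ, ((m ∣ x ∨ n ∣ x) ∧ x ≤ m * n) ↔ ∃ i < m + n, k i = x)
    (M : Matrix (Fin (m + n - 1)) (Fin (m + n - 1)) (Polynomial (Polynomial ℤ)))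
    (hM : ∀ i j : Fin (m + n - 1), M i j =
      if i.val + 1 ≤ n - 1 then
        (if j.val + 1 = m then -(Polynomial.C (Polynomial.X : Polynomial ℤ)) ^ (i.val + 1)
         else if j.val + 1 = m + (i.val + 1) then 1 else 0)
      else if i.val + 1 = n then
        (if j.val + 1 = m then -(Polynomial.C (Polynomial.X : Polynomial ℤ)) ^ n else 0)
      else
        (if j.val + 1 = i.val + 1 - n then (Polynomial.C (Polynomial.X : Polynomial ℤ)) ^ n
         else if j.val + 1 = m then -(Polynomial.C (Polynomial.X : Polynomial ℤ)) ^ n else 0)) :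
    Matrix.det (1 - (Polynomial.X : Polynomial (Polynomial ℤ)) • M) =
      ∑ i ∈ Finset.range (m + n),
        Polynomial.C (Polynomial.X ^ (k i)) * Polynomial.X ^ i := by
  have hN2 : 2 ≤ m + n - 1 := by omega
  set tt : R8 := Polynomial.C Polynomial.X with htt
  set cv : Fin (m+n-1) → R8 := fun i => tt ^ (min (i.val+1) n) with hcv
  set m₀ : Fin (m+n-1) := ⟨m-1, by omega⟩ with hm₀
  have hm₀v : m₀.val + 1 = m := by
    have : m₀.val = m - 1 := rfl
    omega
  set B : Matrix (Fin (m+n-1)) (Fin (m+n-1)) R8 :=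
    1 - (Polynomial.X : R8) • d8S m n with hB
  -- Step 1: column decomposition
  have hScol : ∀ i : Fin (m+n-1), d8S m n i m₀ = 0 := by
    intro i
    show (if i.val + 1 ≤ n - 1 then (if m₀.val + 1 = m + (i.val + 1) then 1 else 0)
      else if i.val + 1 = n then 0
      else if m₀.val + 1 = i.val + 1 - n then tt^n else 0) = 0
    have hi := i.isLt
    by_cases h1 : i.val + 1 ≤ n - 1
    · rw [if_pos h1, if_neg (by omega)]
    · rw [if_neg h1]
      by_cases h2 : i.val + 1 = n
      · rw [if_pos h2]
      · rw [if_neg h2, if_neg (by omega)]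
  have hMcol : ∀ i : Fin (m+n-1), M i m₀ = -(cv i) := by
    intro i
    rw [hM]
    have hi := i.isLt
    by_cases h1 : i.val + 1 ≤ n - 1
    · rw [if_pos h1, if_pos hm₀v]
      have : min (i.val+1) n = i.val + 1 := by omega
      rw [hcv]
      show -(tt ^ (i.val+1)) = -(tt ^ min (i.val+1) n)
      rw [this]
    · rw [if_neg h1]
      by_cases h2 : i.val + 1 = n
      · rw [if_pos h2, if_pos hm₀v]
        have : min (i.val+1) n = n := by omega
        show -(tt ^ n) = -(tt ^ min (i.val+1) n)
        rw [this]
      · rw [if_neg h2, if_neg (by omega), if_pos hm₀v]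
        have : min (i.val+1) n = n := by omega
        show -(tt ^ n) = -(tt ^ min (i.val+1) n)
        rw [this]
  have hMoff : ∀ (i j : Fin (m+n-1)), j ≠ m₀ → M i j = d8S m n i j := by
    intro i j hj
    have hjm : j.val + 1 ≠ m := by
      intro h
      exact hj (Fin.ext (by omega))
    rw [hM]
    show _ = (if i.val + 1 ≤ n - 1 then (if j.val + 1 = m + (i.val + 1) then 1 else 0)
      else if i.val + 1 = n then 0
      else if j.val + 1 = i.val + 1 - n then tt^n else 0)
    by_cases h1 : i.val + 1 ≤ n - 1
    · rw [if_pos h1, if_pos h1, if_neg hjm]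
    · rw [if_neg h1, if_neg h1]
      by_cases h2 : i.val + 1 = n
      · rw [if_pos h2, if_pos h2, if_neg hjm]
      · rw [if_neg h2, if_neg h2]
        by_cases h3 : j.val + 1 = i.val + 1 - n
        · rw [if_pos h3, if_pos h3]
        · rw [if_neg h3, if_neg h3, if_neg hjm]
  have hA : 1 - (Polynomial.X : R8) • M =
      Matrix.updateCol B m₀ ((fun i => B i m₀) + fun i => (Polynomial.X : R8) * cv i) := by
    apply Matrix.ext
    intro i j
    rw [Matrix.updateCol_apply]
    by_cases hj : j = m₀
    · rw [if_pos hj, hj]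
      show (1 : Matrix _ _ R8) i m₀ - Polynomial.X * M i m₀ =
        ((1 : Matrix _ _ R8) i m₀ - Polynomial.X * d8S m n i m₀) + Polynomial.X * cv i
      rw [hMcol i, hScol i]
      ring
    · rw [if_neg hj]
      show (1 : Matrix _ _ R8) i j - Polynomial.X * M i j =
        (1 : Matrix _ _ R8) i j - Polynomial.X * d8S m n i j
      rw [hMoff i j hj]
  rw [hA, Matrix.det_updateCol_add]
  have h1 : Matrix.updateCol B m₀ (fun i => B i m₀) = B := Matrix.updateCol_eq_self B m₀
  have h2 : (fun i => (Polynomial.X : R8) * cv i) = (Polynomial.X : R8) • cv := rfl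
  rw [h1, h2, Matrix.det_updateCol_smul, d8detB m n hm hmn hcop]
  -- Step 2: adjugate = geometric series
  set Cm : Matrix (Fin (m+n-1)) (Fin (m+n-1)) R8 :=
    ∑ kk ∈ Finset.range (m+n-1), (Polynomial.X : R8)^kk • (d8S m n)^kk with hCm
  have hBC : B * Cm = 1 := by
    rw [hB, sub_mul, one_mul, hCm, Finset.mul_sum]
    have hterm : ∀ kk, ((Polynomial.X : R8) • d8S m n) * ((Polynomial.X : R8)^kk • (d8S m n)^kk) =
        (Polynomial.X : R8)^(kk+1) • (d8S m n)^(kk+1) := by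
      intro kk
      rw [Matrix.smul_mul, Matrix.mul_smul, smul_smul]
      congr 1
      · rw [pow_succ']
      · rw [pow_succ']
    rw [Finset.sum_congr rfl (fun kk _ => hterm kk)]
    have hshift : ∑ kk ∈ Finset.range (m+n-1), (Polynomial.X : R8)^(kk+1) • (d8S m n)^(kk+1) =
        (∑ kk ∈ Finset.range ((m+n-1)+1), (Polynomial.X : R8)^kk • (d8S m n)^kk) -
          (Polynomial.X : R8)^0 • (d8S m n)^0 := by
      rw [Finset.sum_range_succ']
      simp
    rw [hshift, Finset.sum_range_succ]
    rw [d8SN m n hm hmn hcop]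
    simp
  have hCB : Cm * B = 1 := mul_eq_one_comm.mp hBC
  have hadj : B.adjugate = Cm := by
    calc B.adjugate = B.adjugate * (B * Cm) := by rw [hBC, Matrix.mul_one]
    _ = (B.adjugate * B) * Cm := by rw [Matrix.mul_assoc]
    _ = (B.det • (1 : Matrix _ _ R8)) * Cm := by rw [Matrix.adjugate_mul]
    _ = Cm := by rw [d8detB m n hm hmn hcop, one_smul, Matrix.one_mul]
  -- Step 3: evaluate the cramer entry
  have hcr : (Matrix.updateCol B m₀ cv).det = (Cm *ᵥ cv) m₀ := by
    rw [← Matrix.cramer_apply, Matrix.cramer_eq_adjugate_mulVec, hadj]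
  rw [hcr]
  -- evaluate the mulVec entry
  obtain ⟨hk0, hkS⟩ := d8w_enum m n hm hmn hcop k hmono hmem
  have hentry : ∀ kk, kk ≤ m + n - 2 →
      ∑ j, ((d8S m n)^kk) m₀ j * cv j = tt ^ (k (kk+1)) := by
    intro kk hkk
    obtain ⟨heq, hw1, hw2, hab, ha, hb, _⟩ := d8w_inv m n hm hmn hcop kk hkk
    have hrow := d8row m n hm hmn hcop kk 0 (by omega) m₀
    have hm₀w : m₀.val + 1 = (d8w m n 0).1 := hm₀v
    set u₁ : Fin (m+n-1) := ⟨(d8w m n kk).1 - 1, by omega⟩ with hu₁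
    have hu₁v : u₁.val + 1 = (d8w m n kk).1 := by
      have : u₁.val = (d8w m n kk).1 - 1 := rfl
      omega
    have hsummand : ∀ j : Fin (m+n-1), ((d8S m n)^kk) m₀ j * cv j =
        if j = u₁ then tt ^ (n * ((d8w m n kk).2.2 - 1)) * cv j else 0 := by
      intro j
      have := hrow j hm₀w
      rw [Nat.zero_add] at this
      rw [this]
      have hb0 : (d8w m n 0).2.2 = 1 := rfl
      rw [hb0]
      by_cases h : j.val + 1 = (d8w m n kk).1
      · rw [if_pos h, if_pos (Fin.ext (by omega) : j = u₁)]
      · rw [if_neg h, if_neg (fun hc : j = u₁ => h (by rw [hc]; exact hu₁v)), zero_mul]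
    rw [Finset.sum_congr rfl (fun j _ => hsummand j), Finset.sum_ite_eq' Finset.univ u₁,
      if_pos (Finset.mem_univ u₁)]
    rw [hcv]
    show tt ^ (n * ((d8w m n kk).2.2 - 1)) * tt ^ (min (u₁.val + 1) n) = tt ^ (k (kk+1))
    rw [hu₁v, ← pow_add]
    congr 1
    rw [hkS kk hkk]
    -- exponent arithmetic
    set w := (d8w m n kk).1; set a := (d8w m n kk).2.1; set b := (d8w m n kk).2.2
    have hsub : n * (b - 1) + n = n * b := by
      have hb' : b - 1 + 1 = b := by omega
      calc n * (b - 1) + n = n * ((b - 1) + 1) := by ring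
      _ = n * b := by rw [hb']
    rcases le_total w n with hw | hw
    · rw [min_eq_left hw, min_eq_left (show m * a ≤ n * b by omega)]
      omega
    · rw [min_eq_right hw, min_eq_right (show n * b ≤ m * a by omega)]
      omega
  -- assemble the sum
  have hmv : (Cm *ᵥ cv) m₀ = ∑ kk ∈ Finset.range (m+n-1), (Polynomial.X : R8)^kk * tt ^ (k (kk+1)) := by
    show ∑ j, Cm m₀ j * cv j = _
    have h3 : ∀ j : Fin (m+n-1), Cm m₀ j * cv j =
        ∑ kk ∈ Finset.range (m+n-1), (Polynomial.X : R8)^kk * (((d8S m n)^kk) m₀ j * cv j) := by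
      intro j
      rw [hCm, Matrix.sum_apply, Finset.sum_mul]
      apply Finset.sum_congr rfl
      intro kk _
      rw [Matrix.smul_apply, smul_eq_mul, mul_assoc]
    rw [Finset.sum_congr rfl (fun j _ => h3 j), Finset.sum_comm]
    apply Finset.sum_congr rfl
    intro kk hkk
    have hkk' : kk ≤ m + n - 2 := by
      have := Finset.mem_range.mp hkk; omega
    rw [← Finset.mul_sum, hentry kk hkk']
  rw [hmv]
  -- final algebraic identity
  rw [show m + n = (m+n-1)+1 from by omega, Finset.sum_range_succ']
  rw [hk0]
  have hC1 : Polynomial.C ((Polynomial.X : Polynomial ℤ) ^ 0) * (Polynomial.X : R8) ^ 0 = 1 := by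
    simp
  rw [hC1, Finset.mul_sum]
  rw [Finset.sum_congr rfl (fun i _ => show (Polynomial.X : R8) * ((Polynomial.X : R8)^i * tt ^ (k (i+1))) =
    Polynomial.C ((Polynomial.X : Polynomial ℤ) ^ (k (i+1))) * (Polynomial.X : R8) ^ (i+1) from by
      rw [htt, ← map_pow]
      ring)]
  rw [add_comm]
  congr 2
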